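/- Fix a positive integer k and assume Alspach's conjecture holds in every torsion-free abelian group for subsets of size k. Then there exists a positive integer N(k) such that for every abelian group G with θ(G) > N(k), every subset A of G \ {0} of size k with ∑_{z∈A} z ≠ 0 admits an ordering of its elements whose partial sums are nonzero and pairwise distinct. -/

import Mathlib

/-- An ordering of the finite set `A` (as a list) whose partial sums are all nonzero
and pairwise distinct. -/
def IsAlspachOrdering {G : Type*} [AddCommGroup G] (A : Finset G) (l : List G) : Prop :=
  l.Nodup ∧ (∀ x, x ∈ l ↔ x ∈ A) ∧
    (∀ i : ℕ, 1 ≤ i → i ≤ l.length → (l.take i).sum ≠ 0) ∧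
    (∀ i j : ℕ, 1 ≤ i → i < j → j ≤ l.length → (l.take i).sum ≠ (l.take j).sum)


universe u

theorem stmt7 (k : ℕ) (hk : 0 < k)
    (hyp : ∀ (G : Type u) [AddCommGroup G],
      (∀ (n : ℕ) (g : G), 0 < n → n • g = 0 → g = 0) →
      ∀ A : Finset G, (0 : G) ∉ A → A.card = k → ∑ z ∈ A, z ≠ 0 →
        ∃ l : List G, IsAlspachOrdering A l) :
    ∃ N : ℕ, 0 < N ∧ ∀ (G : Type u) [AddCommGroup G],
      (∀ g : G, g ≠ 0 → N < addOrderOf g ∨ addOrderOf g = 0) →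
      ∀ A : Finset G, (0 : G) ∉ A → A.card = k → ∑ z ∈ A, z ≠ 0 →
        ∃ l : List G, IsAlspachOrdering A l := by
    classical
  by_contra hcon
  push_neg at hcon
  choose G inst hθ A h0A hcard hsum hno using fun N : ℕ => hcon (N + 1) N.succ_pos
  letI : ∀ N, AddCommGroup (G N) := inst
  set U : Ultrafilter ℕ := Ultrafilter.of Filter.atTop with hUdef
  have hatTop : (U : Filter ℕ) ≤ Filter.atTop := Ultrafilter.of_le _
  let K : AddSubgroup (∀ n, G n) :=
  { carrier := {f | ∀ᶠ n in (U : Filter ℕ), f n = 0}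
    zero_mem' := Filter.Eventually.of_forall fun _ => rfl
    add_mem' := fun {f g} hf hg => (hf.and hg).mono fun n hn => by
      simp only [Pi.add_apply, hn.1, hn.2, add_zero]
    neg_mem' := fun {f} hf => hf.mono fun n hn => by simp [hn] }
  let Q := (∀ n, G n) ⧸ K
  let mkQ : (∀ n, G n) →+ Q := QuotientAddGroup.mk' K
  have hmk0 : ∀ f : ∀ n, G n, mkQ f = 0 ↔ ∀ᶠ n in (U : Filter ℕ), f n = 0 :=
    fun f => QuotientAddGroup.eq_zero_iff f
  have hmkne : ∀ f : ∀ n, G n, mkQ f ≠ 0 → ∀ᶠ n in (U : Filter ℕ), f n ≠ 0 := by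
    intro f hf
    exact (Ultrafilter.eventually_not).2 fun h => hf ((hmk0 f).2 h)
  have htf : ∀ (n : ℕ) (g : Q), 0 < n → n • g = 0 → g = 0 := by
    intro n g hn hg
    obtain ⟨f, rfl⟩ := QuotientAddGroup.mk'_surjective K g
    rw [← map_nsmul] at hg
    rw [show ((QuotientAddGroup.mk' K) (n • f) : Q) = mkQ (n • f) from rfl, hmk0] at hg
    rw [show ((QuotientAddGroup.mk' K) f : Q) = mkQ f from rfl, hmk0]
    have hmem : ∀ᶠ m in (U : Filter ℕ), n ≤ m :=
      hatTop (Filter.eventually_atTop.2 ⟨n, fun m hm => hm⟩)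
    filter_upwards [hg, hmem] with m h1 h2
    by_contra hne
    rw [← Ne] at hne
    have hd : addOrderOf (f m) ∣ n := addOrderOf_dvd_of_nsmul_eq_zero (by simpa using h1)
    rcases hθ m (f m) hne with hlt | h0
    · have hlt' : m + 1 < addOrderOf (f m) := hlt
      have := Nat.le_of_dvd hn hd
      omega
    · have h0' : addOrderOf (f m) = 0 := h0
      rw [h0'] at hd
      exact absurd (Nat.eq_zero_of_zero_dvd hd) (by omega)
  -- enumerate each A N
  let e : ∀ N, (A N : Finset (G N)) ≃ Fin k := fun N => (A N).equivFinOfCardEq (hcard N)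
  let a : ∀ N, Fin k → G N := fun N j => ((e N).symm j : G N)
  have haA : ∀ N j, a N j ∈ A N := fun N j => ((e N).symm j).2
  have hainj : ∀ N, Function.Injective (a N) := fun N j j' h =>
    (e N).symm.injective (Subtype.ext h)
  have hasurj : ∀ N, ∀ x ∈ A N, ∃ j, a N j = x := fun N x hx =>
    ⟨e N ⟨x, hx⟩, congrArg Subtype.val ((e N).symm_apply_apply ⟨x, hx⟩)⟩
  have hasum : ∀ N, ∑ j, a N j = ∑ z ∈ A N, z := fun N =>
    (Equiv.sum_comp (e N).symm (fun x : (A N : Finset (G N)) => (x : G N))).trans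
      (Finset.sum_coe_sort (A N) (fun z => z))
  -- transfer to Q
  let F : Fin k → (∀ n, G n) := fun j n => a n j
  let b : Fin k → Q := fun j => mkQ (F j)
  have hbinj : Function.Injective b := by
    intro j j' h
    by_contra hne
    have h2 : mkQ (F j - F j') = 0 := by rw [map_sub, sub_eq_zero]; exact h
    rw [hmk0] at h2
    obtain ⟨n, hn⟩ := h2.exists
    exact hne (hainj n (by simpa [F, sub_eq_zero] using hn))
  let B : Finset Q := Finset.image b Finset.univ
  have hBcard : B.card = k := by
    rw [Finset.card_image_of_injective _ hbinj, Finset.card_univ, Fintype.card_fin]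
  have hB0 : (0 : Q) ∉ B := by
    intro h
    obtain ⟨j, -, hj⟩ := Finset.mem_image.1 h
    obtain ⟨n, hn⟩ := ((hmk0 (F j)).1 hj).exists
    exact h0A n (by rw [← hn]; exact haA n j)
  have hBsum : ∑ z ∈ B, z ≠ 0 := by
    have h1 : ∑ z ∈ B, z = mkQ (∑ j, F j) := by
      rw [map_sum]
      exact Finset.sum_image fun x _ y _ h => hbinj h
    rw [h1]
    intro h
    rw [hmk0] at h
    obtain ⟨n, hn⟩ := h.exists
    apply hsum n
    rw [← hasum n]
    simpa [F] using hn
  obtain ⟨l, hAl⟩ := hyp Q htf B hB0 hBcard hBsum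
  obtain ⟨hlnd, hlmem, hl0, hldist⟩ := hAl
  -- list length
  have hltF : l.toFinset = B := by
    ext x; rw [List.mem_toFinset]; exact hlmem x
  have hllen : l.length = k := by
    rw [← List.toFinset_card_of_nodup hlnd, hltF, hBcard]
  -- back-map to Fin k
  haveI : Nonempty (Fin k) := ⟨⟨0, hk⟩⟩
  let r : Q → Fin k := Function.invFun b
  have hrb : ∀ j, r (b j) = j := Function.leftInverse_invFun hbinj
  let L : List (Fin k) := l.map r
  have hLb : L.map b = l := by
    show (l.map r).map b = l
    rw [List.map_map]
    have hc : ∀ x ∈ l, (b ∘ r) x = id x := by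
      intro x hx
      obtain ⟨j, -, rfl⟩ := Finset.mem_image.1 ((hlmem x).1 hx)
      simp only [Function.comp_apply, id_eq, hrb]
    rw [List.map_congr_left hc, List.map_id]
  have hLnd : L.Nodup := List.Nodup.of_map b (hLb ▸ hlnd)
  have hLlen : L.length = k := by
    show (l.map r).length = k
    rw [List.length_map, hllen]
  have hLmem : ∀ j : Fin k, j ∈ L := by
    have huniv : L.toFinset = Finset.univ :=
      Finset.eq_univ_of_card _ (by
        rw [List.toFinset_card_of_nodup hLnd, hLlen, Fintype.card_fin])
    intro j
    rw [← List.mem_toFinset, huniv]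
    exact Finset.mem_univ j
  -- partial sums in Q as mkQ of coordinatewise partial sums
  have hsum_take : ∀ i : ℕ, (l.take i).sum = mkQ (((L.take i).map F).sum) := by
    intro i
    rw [map_list_sum mkQ, List.map_map, ← hLb, ← List.map_take]
    rfl
  have heval : ∀ (s : List (Fin k)) (n : ℕ), ((s.map F).sum) n = (s.map (a n)).sum := by
    intro s n
    induction s with
    | nil => rfl
    | cons x t ih =>
      simp only [List.map_cons, List.sum_cons, Pi.add_apply, ih]
      rfl
  -- each condition holds on a U-large set
  have hcond1 : ∀ i : ℕ, 1 ≤ i → i ≤ k →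
      ∀ᶠ n in (U : Filter ℕ), ((L.take i).map (a n)).sum ≠ 0 := by
    intro i h1 h2
    have h3 := hl0 i h1 (by rw [hllen]; exact h2)
    rw [hsum_take i] at h3
    filter_upwards [hmkne _ h3] with n hn
    rw [← heval]
    exact hn
  have hcond2 : ∀ i j : ℕ, 1 ≤ i → i < j → j ≤ k →
      ∀ᶠ n in (U : Filter ℕ), ((L.take i).map (a n)).sum ≠ ((L.take j).map (a n)).sum := by
    intro i j h1 h2 h3
    have hne := hldist i j h1 h2 (by rw [hllen]; exact h3)
    have h4 : mkQ (((L.take i).map F).sum - ((L.take j).map F).sum) ≠ 0 := by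
      rw [map_sub, sub_ne_zero, ← hsum_take, ← hsum_take]
      exact hne
    filter_upwards [hmkne _ h4] with n hn
    intro h
    apply hn
    rw [Pi.sub_apply, heval, heval, h, sub_self]
  -- combine finitely many conditions
  have hall : ∀ᶠ n in (U : Filter ℕ),
      (∀ i ∈ Finset.range (k+1), 1 ≤ i → i ≤ k → ((L.take i).map (a n)).sum ≠ 0) ∧
      (∀ i ∈ Finset.range (k+1), ∀ j ∈ Finset.range (k+1),
        1 ≤ i → i < j → j ≤ k →
          ((L.take i).map (a n)).sum ≠ ((L.take j).map (a n)).sum) := by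
    apply Filter.Eventually.and
    · rw [Filter.eventually_all_finset]
      intro i _
      by_cases hc : 1 ≤ i ∧ i ≤ k
      · filter_upwards [hcond1 i hc.1 hc.2] with n hn _ _
        exact hn
      · exact Filter.Eventually.of_forall fun n h1 h2 => absurd ⟨h1, h2⟩ hc
    · rw [Filter.eventually_all_finset]
      intro i _
      rw [Filter.eventually_all_finset]
      intro j _
      by_cases hc : 1 ≤ i ∧ i < j ∧ j ≤ k
      · filter_upwards [hcond2 i j hc.1 hc.2.1 hc.2.2] with n hn _ _ _
        exact hn
      · exact Filter.Eventually.of_forall fun n h1 h2 h3 => absurd ⟨h1, h2, h3⟩ hc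
  obtain ⟨n, hn1, hn2⟩ := hall.exists
  -- the pulled-back list is an Alspach ordering for A n, contradiction
  apply hno n (L.map (a n))
  have hlen' : (L.map (a n)).length = k := by rw [List.length_map, hLlen]
  refine ⟨List.Nodup.map (hainj n) hLnd, ?_, ?_, ?_⟩
  · intro x
    simp only [List.mem_map]
    constructor
    · rintro ⟨j, -, rfl⟩
      exact haA n j
    · intro hx
      obtain ⟨j, hj⟩ := hasurj n x hx
      exact ⟨j, hLmem j, hj⟩
  · intro i h1 h2
    rw [hlen'] at h2
    rw [← List.map_take]
    exact hn1 i (Finset.mem_range.2 (by omega)) h1 h2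
  · intro i j h1 h2 h3
    rw [hlen'] at h3
    rw [← List.map_take (f := a n) (l := L), ← List.map_take (f := a n) (l := L)]
    exact hn2 i (Finset.mem_range.2 (by omega)) j (Finset.mem_range.2 (by omega)) h1 h2 h3
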